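/- For every n ≥ 1, the sum over integer partitions i of n of the double product ∏_{j=1}^{d(i)} ∏_{ℓ=1}^{j} C(n − Σ_{k=1}^{j−1} k·m(i,k) − (ℓ−1)·m(i,j), m(i,j)) equals the sum over integer partitions i of n of ∏_{j=1}^{d(i)} [ C(n − Σ_{k=1}^{j−1} k·m(i,k), j·m(i,j)) · ∏_{ℓ=1}^{j} C((j−ℓ+1)·m(i,j), m(i,j)) ]. -/

import Mathlib

/-- `m(i,j)`: the multiplicity of the part of size `j` in the partition `i`. -/
def Nat.Partition.mult {n : ℕ} (i : n.Partition) (j : ℕ) : ℕ :=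
  Multiset.count j i.parts

/-- `d(i)`: the largest part of the partition `i`. -/
def Nat.Partition.dmax {n : ℕ} (i : n.Partition) : ℕ :=
  i.parts.toFinset.sup id

open Finset

lemma refl_prod (j : ℕ) (f : ℕ → ℕ) :
    ∏ ℓ ∈ Icc 1 j, f (j - ℓ + 1) = ∏ t ∈ Icc 1 j, f t := by
  apply Finset.prod_nbij' (fun ℓ => j - ℓ + 1) (fun t => j - t + 1) <;>
    intro a ha <;> simp only [mem_Icc] at * <;> omega

lemma key (m : ℕ) : ∀ j N, j * m ≤ N →
    ∏ ℓ ∈ Icc 1 j, (N - (ℓ - 1) * m).choose m =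
      N.choose (j * m) * ∏ t ∈ Icc 1 j, (t * m).choose m := by
  intro j
  induction j with
  | zero => simp
  | succ j ih =>
    intro N h
    have hj : j * m ≤ N := le_trans (by nlinarith) h
    rw [Finset.prod_Icc_succ_top (by omega), Finset.prod_Icc_succ_top (by omega),
      ih N hj]
    simp only [Nat.add_sub_cancel]
    have hkey : N.choose (j * m) * (N - j * m).choose m
        = N.choose ((j + 1) * m) * ((j + 1) * m).choose m := by
      have hmle : j * m ≤ (j + 1) * m := by nlinarith
      have := Nat.choose_mul (n := N) (k := (j + 1) * m) (s := j * m) hmle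
      have h2 : (j + 1) * m - j * m = m := by
        rw [Nat.add_mul]; omega
      have h3 : ((j + 1) * m).choose (j * m) = ((j + 1) * m).choose m := by
        rw [show j * m = (j + 1) * m - m from by rw [Nat.add_mul]; omega,
          Nat.choose_symm (by nlinarith : m ≤ (j + 1) * m)]
      rw [h2, h3] at this
      omega
    rw [mul_right_comm, hkey]; ring

lemma parts_sum_eq {n : ℕ} (i : n.Partition) :
    ∑ k ∈ Icc 1 i.dmax, k * i.mult k = n := by
  have hsub : i.parts.toFinset ⊆ Icc 1 i.dmax := by
    intro a ha
    simp only [mem_Icc]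
    exact ⟨i.parts_pos (Multiset.mem_toFinset.mp ha), Finset.le_sup (f := id) ha⟩
  have h := Finset.sum_multiset_count_of_subset i.parts (Icc 1 i.dmax) hsub
  rw [i.parts_sum] at h
  exact (Finset.sum_congr rfl fun k _ => by
    simp [Nat.Partition.mult, smul_eq_mul, mul_comm]).trans h.symm

/-- the two formulas (2) and (3) for `|BP_n^0|` agree. -/
theorem BPn0_formula_2_eq_3 (n : ℕ) (hn : 1 ≤ n) :
    (∑ i : n.Partition, ∏ j ∈ Icc 1 i.dmax, ∏ ℓ ∈ Icc 1 j,
      Nat.choose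
        (n - (∑ k ∈ Icc 1 (j - 1), k * i.mult k) - (ℓ - 1) * i.mult j)
        (i.mult j)) =
    ∑ i : n.Partition, ∏ j ∈ Icc 1 i.dmax,
      Nat.choose (n - ∑ k ∈ Icc 1 (j - 1), k * i.mult k) (j * i.mult j) *
        ∏ ℓ ∈ Icc 1 j, Nat.choose ((j - ℓ + 1) * i.mult j) (i.mult j) := by
  apply Finset.sum_congr rfl
  intro i _
  apply Finset.prod_congr rfl
  intro j hj
  simp only [mem_Icc] at hj
  have hsum := parts_sum_eq i
  have hle : (∑ k ∈ Icc 1 (j - 1), k * i.mult k) + j * i.mult j ≤ n := by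
    obtain ⟨j', rfl⟩ : ∃ j', j = j' + 1 := ⟨j - 1, by omega⟩
    have hstep : ∑ k ∈ Icc 1 (j' + 1), k * i.mult k
        = (∑ k ∈ Icc 1 j', k * i.mult k) + (j' + 1) * i.mult (j' + 1) :=
      Finset.sum_Icc_succ_top (by omega) _
    simp only [Nat.add_sub_cancel]
    rw [← hstep]
    calc ∑ k ∈ Icc 1 (j' + 1), k * i.mult k
        ≤ ∑ k ∈ Icc 1 i.dmax, k * i.mult k :=
          Finset.sum_le_sum_of_subset (Finset.Icc_subset_Icc_right hj.2)
      _ = n := hsum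
  have hN : j * i.mult j ≤ n - ∑ k ∈ Icc 1 (j - 1), k * i.mult k := by omega
  rw [key (i.mult j) j _ hN, refl_prod j (fun t => (t * i.mult j).choose (i.mult j))]
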